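/- Let α be a rational angle, i.e. α = (m/n)·2π for integers m, n with n ≠ 0. If sin α is a rational number, then sin α ∈ {-1, -1/2, 0, 1/2, 1}. -/

import Mathlib

open Complex Polynomial

-- root of unity is integral over ℤ
lemma isIntegral_of_pow_eq_one {z : ℂ} {N : ℕ} (hN : N ≠ 0) (h : z ^ N = 1) :
    IsIntegral ℤ z := by
  refine ⟨X ^ N - 1, ?_, ?_⟩
  · simpa using monic_X_pow_sub_C (1:ℤ) hN
  · simp [h]

lemma isIntegral_I : IsIntegral ℤ (Complex.I) := by
  refine ⟨X ^ 2 + 1, ?_, ?_⟩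
  · apply Polynomial.monic_X_pow_add_C (1:ℤ) two_ne_zero
  · simp

theorem sin_rational_angle_rational_values
    (α : ℝ) (m n : ℤ) (hn : n ≠ 0) (hα : α = ((m : ℝ) / (n : ℝ)) * (2 * Real.pi))
    (hsin : ∃ q : ℚ, Real.sin α = (q : ℝ)) :
    Real.sin α ∈ ({-1, -1/2, 0, 1/2, 1} : Set ℝ) := by
  obtain ⟨q, hq⟩ := hsin
  set z : ℂ := Complex.exp (α * Complex.I) with hz
  have hzn : z ^ (n : ℤ) = 1 := by
    rw [hz, ← Complex.exp_int_mul]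
    have : (n : ℂ) * (α * Complex.I) = m * (2 * Real.pi * Complex.I) := by
      rw [hα]; push_cast
      have : (n:ℂ) ≠ 0 := Int.cast_ne_zero.mpr hn
      field_simp
    rw [this, Complex.exp_int_mul_two_pi_mul_I]
  have hNz : z ^ n.natAbs = 1 := by
    rcases Int.natAbs_eq n with h | h
    · rw [h] at hzn; exact_mod_cast hzn
    · rw [h, zpow_neg, inv_eq_one] at hzn; exact_mod_cast hzn
  have hNa : n.natAbs ≠ 0 := Int.natAbs_ne_zero.mpr hn
  have hzI : IsIntegral ℤ z := isIntegral_of_pow_eq_one hNa hNz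
  have hwz : z⁻¹ ^ n.natAbs = 1 := by rw [inv_pow, hNz, inv_one]
  have hwI : IsIntegral ℤ z⁻¹ := isIntegral_of_pow_eq_one hNa hwz
  -- 2 sin α = (z⁻¹ - z) * I
  have hsin2 : ((2 * q : ℚ) : ℂ) = (z⁻¹ - z) * Complex.I := by
    have h1 : Complex.sin ↑α = ((q:ℝ):ℂ) := by rw [← Complex.ofReal_sin, hq]
    have h2 : Complex.sin ↑α = (Complex.exp (-↑α * Complex.I) - Complex.exp (↑α * Complex.I)) * Complex.I / 2 := rfl
    have hinv : z⁻¹ = Complex.exp (-↑α * Complex.I) := by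
      rw [hz, ← Complex.exp_neg, neg_mul]
    have key : ((q:ℝ):ℂ) = (z⁻¹ - z) * Complex.I / 2 := by
      rw [← h1, h2, hinv, hz]
    push_cast at key ⊢
    rw [key]; ring
  have hint : IsIntegral ℤ ((2 * q : ℚ) : ℂ) := by
    rw [hsin2]
    exact (hwI.sub hzI).mul isIntegral_I
  have hintq : IsIntegral ℤ (2 * q : ℚ) := by
    have : ((2*q : ℚ) : ℂ) = algebraMap ℚ ℂ (2*q) := rfl
    rw [this] at hint
    exact (isIntegral_algebraMap_iff (algebraMap ℚ ℂ).injective).mp hint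
  obtain ⟨k, hk⟩ := IsIntegrallyClosed.isIntegral_iff.mp hintq
  have hkq : (k : ℚ) = 2 * q := hk
  have hbound : |Real.sin α| ≤ 1 := Real.abs_sin_le_one α
  have hqb : |(q:ℝ)| ≤ 1 := by rw [← hq]; exact hbound
  have hkb : |k| ≤ 2 := by
    obtain ⟨hl, hr⟩ := abs_le.mp hqb
    have hkr : (k:ℝ) = 2 * q := by exact_mod_cast hkq
    have : |(k:ℝ)| ≤ 2 := by rw [abs_le]; constructor <;> linarith
    exact_mod_cast this
  have hqk : (q : ℝ) = k / 2 := by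
    have : (k:ℝ) = 2 * q := by exact_mod_cast hkq
    linarith
  rw [hq, hqk]
  obtain ⟨hl2, hr2⟩ := abs_le.mp hkb
  interval_cases k <;> norm_num [Set.mem_insert_iff]
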